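/- Let B be an L × m matrix with entries in {0,1} and h ∈ {0,1}^m. If B' is obtained from B by replacing every entry 1 by a fixed positive real c and every entry 0 by a fixed nonpositive real d ≤ 0, and if the vector B h (over ℤ) has a unique maximum at index j attained with (Bh)(j) = Σᵢ h(i) (i.e., row j of B has 1's at every position where h is 1), then the first index of the maximum of B' h equals j. -/
import Mathlib


/-- The first (smallest) index at which a vector `v ∈ ℝ^L` attains its maximum. -/
noncomputable def argmaxFst {L : ℕ} [NeZero L] (v : Fin L → ℝ) : Fin L :=
  (Finset.univ.filter fun j => v j = Finset.univ.sup' ⟨0, Finset.mem_univ 0⟩ v).min' (by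
    obtain ⟨i, _, hi⟩ := Finset.exists_mem_eq_sup'
      (⟨0, Finset.mem_univ 0⟩ : (Finset.univ (α := Fin L)).Nonempty) v
    exact ⟨i, Finset.mem_filter.mpr ⟨Finset.mem_univ i, hi.symm⟩⟩)

/-- Replacing the 1's of a 0-1 matrix `B` by a positive constant `c` and its 0's
by a nonpositive constant `d`: if `h ∈ {0,1}^m` is nonzero and `j` is the unique
row of `B` having 1's at every position of the support of `h`, then the first
index of the maximum of `B' h` is `j`. -/
theorem stmt15 {L m : ℕ} [NeZero L]
    (B : Matrix (Fin L) (Fin m) ℝ) (hB : ∀ k i, B k i = 0 ∨ B k i = 1)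
    (h : Fin m → ℝ) (hh : ∀ i, h i = 0 ∨ h i = 1) (hne : h ≠ 0)
    (c d : ℝ) (hc : 0 < c) (hd : d ≤ 0)
    (B' : Matrix (Fin L) (Fin m) ℝ)
    (hB' : ∀ k i, B' k i = if B k i = 1 then c else d)
    (j : Fin L) (hj : ∀ i, h i = 1 → B j i = 1)
    (huniq : ∀ k, (∀ i, h i = 1 → B k i = 1) → k = j) :
    argmaxFst (B'.mulVec h) = j := by
  set v := B'.mulVec h with hv
  have key : ∀ k, k ≠ j → v k < v j := by
    intro k hk
    have hex : ∃ i, h i = 1 ∧ B k i ≠ 1 := by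
      by_contra hcon
      push_neg at hcon
      exact hk (huniq k fun i hi => hcon i hi)
    obtain ⟨i0, hi0, hBk⟩ := hex
    have hsum : ∑ i, B' k i * h i < ∑ i, B' j i * h i := by
      apply Finset.sum_lt_sum
      · intro i _
        rcases hh i with h0 | h1
        · simp [h0]
        · have hji : B' j i = c := by rw [hB']; simp [hj i h1]
          rcases hB k i with hk0 | hk1
          · have : B' k i = d := by rw [hB']; simp [hk0]
            rw [this, hji, h1]
            simpa using hd.trans hc.le
          · have : B' k i = c := by rw [hB']; simp [hk1]
            rw [this, hji]
        
      · refine ⟨i0, Finset.mem_univ i0, ?_⟩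
        have hji : B' j i0 = c := by rw [hB']; simp [hj i0 hi0]
        have hki : B' k i0 = d := by rw [hB']; simp [hBk]
        rw [hji, hki, hi0]
        simpa using hd.trans_lt hc
    simpa [hv, Matrix.mulVec, dotProduct] using hsum
  have hle : ∀ k, v k ≤ v j := by
    intro k
    rcases eq_or_ne k j with rfl | hk
    · exact le_rfl
    · exact (key k hk).le
  have hsup : Finset.univ.sup' ⟨0, Finset.mem_univ 0⟩ v = v j := by
    apply le_antisymm
    · exact Finset.sup'_le _ _ fun k _ => hle k
    · exact Finset.le_sup' v (Finset.mem_univ j)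
  have hjmem : j ∈ Finset.univ.filter fun k => v k = Finset.univ.sup' ⟨0, Finset.mem_univ 0⟩ v :=
    Finset.mem_filter.mpr ⟨Finset.mem_univ j, hsup.symm⟩
  unfold argmaxFst
  apply le_antisymm
  · exact Finset.min'_le _ _ hjmem
  · set S := Finset.univ.filter fun k => v k = Finset.univ.sup' ⟨0, Finset.mem_univ 0⟩ v
    have hmem := Finset.min'_mem S ⟨j, hjmem⟩
    have := (Finset.mem_filter.mp hmem).2
    by_contra hlt
    push_neg at hlt
    have hne' : S.min' ⟨j, hjmem⟩ ≠ j := ne_of_lt hlt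
    have := key _ hne'
    rw [(Finset.mem_filter.mp hmem).2, hsup] at this
    exact lt_irrefl _ this
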